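/- Let L ⊂ V = 𝔽₂^{2n} be a fixed Lagrangian subspace and let 0 ≤ m ≤ n. The number of m-dimensional isotropic subspaces S of V with S ∩ L = {0} equals binom(n,m)₂ · 2^{m(m+1)/2} · 2^{m(n−m)}. -/

import Mathlib

/-- The field with two elements. -/
abbrev F2 := ZMod 2

/-- The phase space `V = 𝔽₂ⁿ × 𝔽₂ⁿ`. -/
abbrev V (n : ℕ) : Type := (Fin n → F2) × (Fin n → F2)

/-- The symplectic form `[a,b] = aₓ·b_z + a_z·bₓ` on `V n`. -/
def symp {n : ℕ} (a b : V n) : F2 :=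
  (∑ i, a.1 i * b.2 i) + (∑ i, a.2 i * b.1 i)

/-- A subspace is isotropic if the symplectic form vanishes on it. -/
def IsIsotropic {n : ℕ} (S : Submodule F2 (V n)) : Prop :=
  ∀ x ∈ S, ∀ y ∈ S, symp x y = 0

/-- A Lagrangian subspace is an isotropic subspace of dimension `n`. -/
def IsLagrangian {n : ℕ} (S : Submodule F2 (V n)) : Prop :=
  IsIsotropic S ∧ Module.finrank F2 S = n

/-- Gaussian binomial coefficient `binom(m,r)₂`. -/
def gaussBinom (m r : ℕ) : ℚ :=
  ∏ i ∈ Finset.range r, ((2 ^ (m - i) - 1 : ℚ) / (2 ^ (r - i) - 1))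

open Submodule Module Set LinearMap

noncomputable def sympB (n : ℕ) : LinearMap.BilinForm F2 (V n) :=
  LinearMap.mk₂ F2 symp
    (by intro a b c; simp [symp, add_mul, Finset.sum_add_distrib]; ring)
    (by intro r a b; simp [symp, Finset.mul_sum, mul_assoc, mul_add])
    (by intro a b c; simp [symp, mul_add, Finset.sum_add_distrib]; ring)
    (by intro r a b; simp [symp, Finset.mul_sum, mul_left_comm, mul_add])

@[simp] lemma sympB_apply {n : ℕ} (a b : V n) : sympB n a b = symp a b := rfl

lemma symp_comm {n : ℕ} (a b : V n) : symp a b = symp b a := by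
  simp [symp, mul_comm]; ring

lemma sympB_symm {n : ℕ} : (sympB n).IsSymm := ⟨fun a b => symp_comm a b⟩

lemma sympB_refl {n : ℕ} : (sympB n).IsRefl := (sympB_symm).isRefl

lemma symp_self {n : ℕ} (a : V n) : symp a a = 0 := by
  have : ∀ i, a.2 i * a.1 i = a.1 i * a.2 i := fun i => mul_comm _ _
  simp only [symp, this]
  exact CharTwo.add_self_eq_zero _

lemma sympB_nondeg {n : ℕ} : (sympB n).Nondegenerate := by
  have hSL : ∀ a : V n, (∀ b, sympB n a b = 0) → a = 0 := by
   intro a h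
   have h1 : ∀ i, a.1 i = 0 := by
    intro i
    have := h (0, Pi.single i 1)
    simpa [symp, Pi.single_apply, Finset.sum_ite_eq'] using this
   have h2 : ∀ i, a.2 i = 0 := by
    intro i
    have := h (Pi.single i 1, 0)
    simpa [symp, Pi.single_apply, Finset.sum_ite_eq'] using this
   exact Prod.ext (funext h1) (funext h2)
  exact ⟨hSL, fun a h => hSL a (fun b => by rw [sympB_apply, symp_comm]; exact h b)⟩

lemma finrank_V (n : ℕ) : Module.finrank F2 (V n) = 2 * n := by
  simp [V, Module.finrank_prod]; ring

lemma orth_sup {n : ℕ} (A C : Submodule F2 (V n)) :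
    (sympB n).orthogonal (A ⊔ C) = (sympB n).orthogonal A ⊓ (sympB n).orthogonal C := by
  refine le_antisymm (le_inf ((sympB n).orthogonal_le le_sup_left)
    ((sympB n).orthogonal_le le_sup_right)) ?_
  rintro x ⟨hA, hC⟩ y hy
  obtain ⟨a, ha, c, hc, rfl⟩ := Submodule.mem_sup.mp hy
  have := hA a ha
  have := hC c hc
  show sympB n (a + c) x = 0
  rw [LinearMap.BilinForm.add_left, hA a ha, hC c hc, add_zero]

lemma orth_self_of_lagrangian {n : ℕ} {L : Submodule F2 (V n)} (hL : IsLagrangian L) :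
    (sympB n).orthogonal L = L := by
  have hle : L ≤ (sympB n).orthogonal L := fun x hx y hy => hL.1 y hy x hx
  refine (Submodule.eq_of_le_of_finrank_le hle ?_).symm
  rw [LinearMap.BilinForm.finrank_orthogonal sympB_nondeg, finrank_V, hL.2]
  omega

lemma dims_step {n k : ℕ} (hk : k ≤ n) {L S : Submodule F2 (V n)} (hL : IsLagrangian L)
    (hS : IsIsotropic S) (hrk : Module.finrank F2 S = k) (hSL : S ⊓ L = ⊥) :
    Module.finrank F2 ((sympB n).orthogonal S) = 2 * n - k ∧
    Module.finrank F2 ((sympB n).orthogonal S ⊓ (S ⊔ L) : Submodule F2 (V n)) = n := by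
  have horthS : Module.finrank F2 ((sympB n).orthogonal S) = 2 * n - k := by
    rw [LinearMap.BilinForm.finrank_orthogonal sympB_nondeg, finrank_V, hrk]
  refine ⟨horthS, ?_⟩
  have hX : Module.finrank F2 (S ⊔ L : Submodule F2 (V n)) = k + n := by
    have := Submodule.finrank_sup_add_finrank_inf_eq S L
    rw [hSL, finrank_bot, hrk, hL.2] at this
    omega
  have hWL : (sympB n).orthogonal S ⊔ L = ⊤ := by
    have h1 : (sympB n).orthogonal ((sympB n).orthogonal S ⊔ L) = ⊥ := by
      rw [orth_sup, LinearMap.BilinForm.orthogonal_orthogonal sympB_nondeg sympB_refl,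
        orth_self_of_lagrangian hL, hSL]
    have := congrArg ((sympB n).orthogonal) h1
    rwa [LinearMap.BilinForm.orthogonal_orthogonal sympB_nondeg sympB_refl,
      LinearMap.BilinForm.orthogonal_bot] at this
  have hWX : (sympB n).orthogonal S ⊔ (S ⊔ L) = ⊤ := by
    rw [eq_top_iff, ← hWL]
    exact sup_le_sup_left le_sup_right _
  have := Submodule.finrank_sup_add_finrank_inf_eq ((sympB n).orthogonal S) (S ⊔ L)
  rw [hWX, finrank_top, finrank_V, horthS, hX] at this
  omega

lemma nat_card_sigma {ι : Type*} [Fintype ι] (f : ι → Type*) [∀ i, Finite (f i)] :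
    Nat.card (Σ i, f i) = ∑ i, Nat.card (f i) := by
  letI : ∀ i, Fintype (f i) := fun i => Fintype.ofFinite _
  simp_rw [Nat.card_eq_fintype_card]
  exact Fintype.card_sigma

lemma card_mem_not_mem {n : ℕ} (W X : Submodule F2 (V n)) :
    Nat.card {v : V n // v ∈ W ∧ v ∉ X} =
      2 ^ Module.finrank F2 W - 2 ^ Module.finrank F2 (W ⊓ X : Submodule F2 (V n)) := by
  classical
  have e1 : {v : V n // v ∈ W ∧ v ∉ X} ≃ {w : W // ¬ ((w : V n) ∈ X)} :=
    ⟨fun v => ⟨⟨v.1, v.2.1⟩, v.2.2⟩, fun w => ⟨w.1.1, w.1.2, w.2⟩,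
      fun _ => rfl, fun _ => rfl⟩
  have e2 : {w : W // (w : V n) ∈ X} ≃ (W ⊓ X : Submodule F2 (V n)) :=
    ⟨fun w => ⟨w.1.1, ⟨w.1.2, w.2⟩⟩, fun u => ⟨⟨u.1, u.2.1⟩, u.2.2⟩,
      fun _ => rfl, fun _ => rfl⟩
  rw [Nat.card_congr e1, Nat.card_eq_fintype_card, Fintype.card_subtype_compl]
  have hW : Fintype.card W = 2 ^ Module.finrank F2 W := by
    rw [card_eq_pow_finrank (K := F2) (V := W), ZMod.card]
  have hWX : Fintype.card {w : W // (w : V n) ∈ X} =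
      2 ^ Module.finrank F2 (W ⊓ X : Submodule F2 (V n)) := by
    rw [Fintype.card_congr e2, card_eq_pow_finrank (K := F2), ZMod.card]
  rw [hW, hWX]

def Good {n : ℕ} (L : Submodule F2 (V n)) {k : ℕ} (s : Fin k → V n) : Prop :=
  LinearIndependent F2 s ∧ IsIsotropic (span F2 (range s)) ∧ span F2 (range s) ⊓ L = ⊥

lemma range_snoc' {α : Type*} {k : ℕ} (v : Fin k → α) (x : α) :
    Set.range (Fin.snoc v x : Fin (k+1) → α) = insert x (Set.range v) := by
  ext y
  simp only [Set.mem_range, Set.mem_insert_iff]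
  constructor
  · rintro ⟨i, rfl⟩
    induction i using Fin.lastCases with
    | last => left; rw [Fin.snoc_last]
    | cast j => right; exact ⟨j, by simp⟩
  · rintro (rfl | ⟨j, rfl⟩)
    · exact ⟨Fin.last k, Fin.snoc_last _ _⟩
    · exact ⟨j.castSucc, Fin.snoc_castSucc _ _ _⟩

lemma good_snoc {n k : ℕ} {L : Submodule F2 (V n)} (t : Fin k → V n) (ht : Good L t) (v : V n) :
    Good L (Fin.snoc t v) ↔
      (v ∈ (sympB n).orthogonal (span F2 (range t)) ∧ v ∉ (span F2 (range t) ⊔ L)) := by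
  set S := span F2 (range t) with hS
  have hspan : span F2 (range (Fin.snoc t v : Fin (k+1) → V n)) = (F2 ∙ v) ⊔ S := by
    rw [range_snoc', Submodule.span_insert]
  have hvmem : v ∈ (F2 ∙ v) ⊔ S := Submodule.mem_sup_left (mem_span_singleton_self v)
  constructor
  · rintro ⟨hind, hiso, hinf⟩
    have hvS : v ∉ S := (linearIndependent_fin_snoc.mp hind).2
    refine ⟨fun y hy => ?_, fun hvSL => ?_⟩
    · have : symp v y = 0 := hiso v (hspan ▸ hvmem) y (hspan ▸ Submodule.mem_sup_right hy)
      show sympB n y v = 0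
      rw [sympB_apply, symp_comm]; exact this
    · obtain ⟨a, ha, w, hw, hvw⟩ := Submodule.mem_sup.mp hvSL
      have hwmem : w ∈ ((F2 ∙ v) ⊔ S) ⊓ L := by
        refine ⟨?_, hw⟩
        have : w = v - a := by rw [← hvw]; ring
        rw [this]
        exact Submodule.sub_mem _ hvmem (Submodule.mem_sup_right ha)
      rw [← hspan, hinf] at hwmem
      rw [Submodule.mem_bot] at hwmem
      rw [hwmem, add_zero] at hvw
      exact hvS (hvw ▸ ha)
  · rintro ⟨horth, hSL⟩
    have hvS : v ∉ S := fun h => hSL (Submodule.mem_sup_left h)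
    have hsymm : ∀ y ∈ S, symp v y = 0 := fun y hy => by
      rw [symp_comm]; exact horth y hy
    refine ⟨linearIndependent_fin_snoc.mpr ⟨ht.1, hvS⟩, ?_, ?_⟩
    · rw [hspan]
      rintro x hx y hy
      obtain ⟨u, hu, a, ha, rfl⟩ := Submodule.mem_sup.mp hx
      obtain ⟨c, rfl⟩ := mem_span_singleton.mp hu
      obtain ⟨u', hu', b, hb, rfl⟩ := Submodule.mem_sup.mp hy
      obtain ⟨d, rfl⟩ := mem_span_singleton.mp hu'
      show sympB n (c • v + a) (d • v + b) = 0
      rw [LinearMap.BilinForm.add_left, LinearMap.BilinForm.add_right,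
        LinearMap.BilinForm.add_right, LinearMap.BilinForm.smul_left,
        LinearMap.BilinForm.smul_left, LinearMap.BilinForm.smul_right,
        LinearMap.BilinForm.smul_right]
      have h1 : sympB n v v = 0 := symp_self v
      have h2 : sympB n v b = 0 := hsymm b hb
      have h3 : sympB n a v = 0 := horth a ha
      have h4 : sympB n a b = 0 := ht.2.1 a ha b hb
      rw [h1, h2, h3, h4]; ring
    · rw [hspan]
      rw [eq_bot_iff]
      rintro x ⟨hx1, hx2⟩
      obtain ⟨u, hu, a, ha, rfl⟩ := Submodule.mem_sup.mp hx1
      obtain ⟨c, rfl⟩ := mem_span_singleton.mp hu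
      have hall : ∀ x : F2, x = 0 ∨ x = 1 := by decide
      have hc := hall c
      rcases hc with rfl | rfl
      · rw [zero_smul, zero_add] at hx2 ⊢
        have : a ∈ S ⊓ L := ⟨ha, hx2⟩
        rw [ht.2.2] at this
        exact this
      · exfalso
        apply hSL
        rw [one_smul] at hx2
        have : v = (v + a) - a := by ring
        rw [this]
        exact Submodule.sub_mem _ (Submodule.mem_sup_right hx2) (Submodule.mem_sup_left ha)

lemma good_init {n k : ℕ} {L : Submodule F2 (V n)} {s : Fin (k+1) → V n} (h : Good L s) :
    Good L (Fin.init s) := by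
  rw [← Fin.snoc_init_self s] at h
  obtain ⟨h1, h2, h3⟩ := h
  have hle : span F2 (range (Fin.init s)) ≤
      span F2 (range (Fin.snoc (Fin.init s) (s (Fin.last k)) : Fin (k+1) → V n)) :=
    span_mono (by rw [range_snoc']; exact Set.subset_insert _ _)
  refine ⟨(linearIndependent_fin_snoc.mp h1).1, fun x hx y hy => h2 x (hle hx) y (hle hy), ?_⟩
  rw [eq_bot_iff, ← h3]
  exact inf_le_inf_right _ hle

lemma card_good_succ {n k : ℕ} (hk : k + 1 ≤ n) {L : Submodule F2 (V n)} (hL : IsLagrangian L) :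
    Nat.card {s : Fin (k+1) → V n // Good L s} =
      Nat.card {t : Fin k → V n // Good L t} * (2 ^ (2*n - k) - 2 ^ n) := by
  classical
  set f : {s : Fin (k+1) → V n // Good L s} → {t : Fin k → V n // Good L t} :=
    fun s => ⟨Fin.init s.1, good_init s.2⟩ with hf
  have hcard := Nat.card_congr (Equiv.sigmaFiberEquiv f).symm
  rw [hcard, nat_card_sigma]
  have hfiber : ∀ t : {t : Fin k → V n // Good L t},
      Nat.card {s // f s = t} = 2 ^ (2*n - k) - 2 ^ n := by
    intro t
    set S := span F2 (range t.1) with hSdef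
    have e : {s // f s = t} ≃
        {v : V n // v ∈ (sympB n).orthogonal S ∧ v ∉ (S ⊔ L)} := by
      refine ⟨fun s => ⟨s.1.1 (Fin.last k), ?_⟩,
        fun v => ⟨⟨Fin.snoc t.1 v.1, (good_snoc t.1 t.2 v.1).mpr v.2⟩, ?_⟩, ?_, ?_⟩
      · have hinit : Fin.init s.1.1 = t.1 := congrArg Subtype.val s.2
        have hgood : Good L (Fin.snoc t.1 (s.1.1 (Fin.last k)) : Fin (k+1) → V n) := by
          rw [← hinit, Fin.snoc_init_self]
          exact s.1.2
        exact (good_snoc t.1 t.2 _).mp hgood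
      · exact Subtype.ext (by simp [hf, Fin.init_snoc])
      · rintro ⟨⟨s, hs⟩, hfs⟩
        apply Subtype.ext
        apply Subtype.ext
        have hinit : Fin.init s = t.1 := congrArg Subtype.val hfs
        show Fin.snoc t.1 (s (Fin.last k)) = s
        rw [← hinit, Fin.snoc_init_self]
      · rintro ⟨v, hv⟩
        apply Subtype.ext
        show (Fin.snoc t.1 v : Fin (k+1) → V n) (Fin.last k) = v
        rw [Fin.snoc_last]
    rw [Nat.card_congr e]
    have hrk : Module.finrank F2 S = k := by
      rw [hSdef, finrank_span_eq_card t.2.1, Fintype.card_fin]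
    obtain ⟨hW, hWX⟩ := dims_step (Nat.le_of_succ_le hk) hL t.2.2.1 hrk t.2.2.2
    rw [card_mem_not_mem ((sympB n).orthogonal S) (S ⊔ L), hW, hWX]
  rw [Finset.sum_congr rfl (fun t _ => hfiber t), Finset.sum_const, Finset.card_univ,
    ← Nat.card_eq_fintype_card, smul_eq_mul]

lemma card_good_zero {n : ℕ} (L : Submodule F2 (V n)) :
    Nat.card {s : Fin 0 → V n // Good L s} = 1 := by
  have hg : Good L (fun i : Fin 0 => (i.elim0 : V n)) := by
    refine ⟨linearIndependent_empty_type, ?_, ?_⟩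
    · rw [Set.range_eq_empty, Submodule.span_empty]
      intro x hx y hy
      rw [Submodule.mem_bot] at hx hy
      rw [hx, hy, symp_self]
    · rw [Set.range_eq_empty, Submodule.span_empty, bot_inf_eq]
  haveI : Unique {s : Fin 0 → V n // Good L s} :=
    ⟨⟨⟨_, hg⟩⟩, fun a => Subtype.ext (Subsingleton.elim _ _)⟩
  exact Nat.card_unique

lemma card_good {n : ℕ} (m : ℕ) (hm : m ≤ n) {L : Submodule F2 (V n)} (hL : IsLagrangian L) :
    Nat.card {s : Fin m → V n // Good L s} =
      ∏ i ∈ Finset.range m, (2 ^ (2*n - i) - 2 ^ n) := by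
  induction m with
  | zero => simpa using card_good_zero L
  | succ k ih =>
    rw [card_good_succ hm hL, ih (Nat.le_of_succ_le hm), Finset.prod_range_succ]

lemma card_good_eq_card_subspaces {n m : ℕ} (L : Submodule F2 (V n)) :
    Nat.card {s : Fin m → V n // Good L s} =
      Nat.card {S : Submodule F2 (V n) //
        IsIsotropic S ∧ Module.finrank F2 S = m ∧ S ⊓ L = ⊥} *
      ∏ i : Fin m, (2 ^ m - 2 ^ (i : ℕ)) := by
  classical
  set g : {s : Fin m → V n // Good L s} →
      {S : Submodule F2 (V n) // IsIsotropic S ∧ Module.finrank F2 S = m ∧ S ⊓ L = ⊥} :=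
    fun s => ⟨span F2 (range s.1), s.2.2.1,
      by rw [finrank_span_eq_card s.2.1, Fintype.card_fin], s.2.2.2⟩ with hg
  rw [Nat.card_congr (Equiv.sigmaFiberEquiv g).symm, nat_card_sigma]
  have hfiber : ∀ S : {S : Submodule F2 (V n) //
      IsIsotropic S ∧ Module.finrank F2 S = m ∧ S ⊓ L = ⊥},
      Nat.card {s // g s = S} = ∏ i : Fin m, (2 ^ m - 2 ^ (i : ℕ)) := by
    intro S
    have e : {s // g s = S} ≃ {t : Fin m → S.1 // LinearIndependent F2 t} := by
      refine ⟨fun s => ⟨fun i => ⟨s.1.1 i, ?_⟩, ?_⟩, fun t => ⟨⟨fun i => (t.1 i : V n), ?_⟩, ?_⟩,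
        ?_, ?_⟩
      · have hsp : span F2 (range s.1.1) = S.1 := congrArg Subtype.val s.2
        rw [← hsp]
        exact subset_span (mem_range_self i)
      · exact LinearIndependent.of_comp S.1.subtype s.1.2.1
      · -- Good L (fun i => ↑(t.1 i))
        have hind : LinearIndependent F2 (fun i => (t.1 i : V n)) :=
          t.2.map' S.1.subtype (Submodule.ker_subtype S.1)
        have hspan : span F2 (range (fun i => (t.1 i : V n))) = S.1 := by
          have h1 : span F2 (range t.1) = (⊤ : Submodule F2 S.1) := by
            apply Submodule.eq_top_of_finrank_eq
            rw [finrank_span_eq_card t.2, Fintype.card_fin, S.2.2.1]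
          have : (fun i => (t.1 i : V n)) = S.1.subtype ∘ t.1 := rfl
          rw [this, Set.range_comp, ← Submodule.map_span, h1, Submodule.map_top,
            Submodule.range_subtype]
        refine ⟨hind, ?_, ?_⟩
        · rw [hspan]; exact S.2.1
        · rw [hspan]; exact S.2.2.2
      · -- g applied = S
        apply Subtype.ext
        show span F2 (range (fun i => (t.1 i : V n))) = S.1
        have h1 : span F2 (range t.1) = (⊤ : Submodule F2 S.1) := by
          apply Submodule.eq_top_of_finrank_eq
          rw [finrank_span_eq_card t.2, Fintype.card_fin, S.2.2.1]
        have : (fun i => (t.1 i : V n)) = S.1.subtype ∘ t.1 := rfl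
        rw [this, Set.range_comp, ← Submodule.map_span, h1, Submodule.map_top,
          Submodule.range_subtype]
      · rintro ⟨⟨s, hs⟩, hgs⟩
        apply Subtype.ext
        apply Subtype.ext
        rfl
      · rintro ⟨t, ht⟩
        apply Subtype.ext
        funext i
        apply Subtype.ext
        rfl
    rw [Nat.card_congr e]
    haveI : Finite S.1 := inferInstance
    have := card_linearIndependent (K := F2) (V := S.1) (k := m)
      (by rw [S.2.2.1] : m ≤ Module.finrank F2 S.1)
    rw [this, S.2.2.1, ZMod.card]
  rw [Finset.sum_congr rfl (fun S _ => hfiber S), Finset.sum_const, Finset.card_univ,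
    ← Nat.card_eq_fintype_card, smul_eq_mul]

lemma sum_exp (n m : ℕ) (hm : m ≤ n) :
    m*(m+1)/2 + m*(n-m) = ∑ i ∈ Finset.range m, (n - i) := by
  induction m with
  | zero => simp
  | succ k ih =>
    rw [Finset.sum_range_succ, ← ih (Nat.le_of_succ_le hm)]
    obtain ⟨e, rfl⟩ : ∃ e, n = k + (e + 1) := ⟨n - k - 1, by omega⟩
    have h1 : (k+1)*(k+1+1) = k*(k+1) + 2*(k+1) := by ring
    have h2 : (k+1)*(k + (e+1) - (k+1)) = k*e + e := by
      have : k + (e+1) - (k+1) = e := by omega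
      rw [this]; ring
    have h3 : k * (k + (e+1) - k) = k*e + k := by
      have : k + (e+1) - k = e + 1 := by omega
      rw [this]; ring
    have h4 : k + (e+1) - k = e + 1 := by omega
    rw [h1, h2, h3, h4]
    have hx : k*(k+1) % 2 = 0 := Nat.even_iff.mp (Nat.even_mul_succ_self k)
    generalize k*(k+1) = x at hx ⊢
    omega

lemma termwise (n m i : ℕ) (him : i < m) (hm : m ≤ n) :
    ((2:ℚ) ^ (n - i) - 1) / ((2:ℚ) ^ (m - i) - 1) * (2:ℚ) ^ (n - i) *
      ((2:ℚ) ^ m - 2 ^ i) = (2:ℚ) ^ (2*n - i) - 2 ^ n := by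
  obtain ⟨a, ha⟩ : ∃ a, m = i + (a + 1) := ⟨m - i - 1, by omega⟩
  obtain ⟨b, hb⟩ : ∃ b, n = i + b := ⟨n - i, by omega⟩
  have h1 : n - i = b := by omega
  have h2 : m - i = a + 1 := by omega
  have h3 : 2*n - i = i + b + b := by omega
  have hden : (2:ℚ) ^ (a+1) - 1 ≠ 0 := by
    have : (1:ℚ) < 2 ^ (a+1) := by
      apply one_lt_pow₀ (by norm_num) (by omega)
    intro h; nlinarith
  rw [h1, h2, h3, ha, hb]
  field_simp
  ring

/-- For a fixed Lagrangian `L ⊂ 𝔽₂^{2n}` and `0 ≤ m ≤ n`, the number of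
`m`-dimensional isotropic subspaces `S` with `S ∩ L = {0}` equals
`binom(n,m)₂ · 2^{m(m+1)/2} · 2^{m(n−m)}`. -/
theorem stmt1 (n m : ℕ) (hm : m ≤ n) (L : Submodule F2 (V n)) (hL : IsLagrangian L) :
    (Nat.card {S : Submodule F2 (V n) //
        IsIsotropic S ∧ Module.finrank F2 S = m ∧ S ⊓ L = ⊥} : ℚ)
      = gaussBinom n m * 2 ^ (m * (m + 1) / 2) * 2 ^ (m * (n - m)) := by
  have key : Nat.card {S : Submodule F2 (V n) //
        IsIsotropic S ∧ Module.finrank F2 S = m ∧ S ⊓ L = ⊥} *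
      ∏ i ∈ Finset.range m, (2 ^ m - 2 ^ i) =
      ∏ i ∈ Finset.range m, (2 ^ (2*n - i) - 2 ^ n) := by
    rw [Finset.prod_range (fun i => 2 ^ m - 2 ^ i), ← card_good_eq_card_subspaces L,
      card_good m hm hL]
  -- cast to ℚ
  have castP : ((∏ i ∈ Finset.range m, (2 ^ m - 2 ^ i) : ℕ) : ℚ) =
      ∏ i ∈ Finset.range m, ((2:ℚ) ^ m - 2 ^ i) := by
    rw [Nat.cast_prod]
    refine Finset.prod_congr rfl fun i hi => ?_
    have h : (2:ℕ) ^ i ≤ 2 ^ m :=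
      Nat.pow_le_pow_right (by norm_num) (le_of_lt (Finset.mem_range.mp hi))
    rw [Nat.cast_sub h]; push_cast; ring
  have castQ : ((∏ i ∈ Finset.range m, (2 ^ (2*n - i) - 2 ^ n) : ℕ) : ℚ) =
      ∏ i ∈ Finset.range m, ((2:ℚ) ^ (2*n - i) - 2 ^ n) := by
    rw [Nat.cast_prod]
    refine Finset.prod_congr rfl fun i hi => ?_
    have hi' := Finset.mem_range.mp hi
    have h : (2:ℕ) ^ n ≤ 2 ^ (2*n - i) :=
      Nat.pow_le_pow_right (by norm_num) (by omega)
    rw [Nat.cast_sub h]; push_cast; ring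
  have keyQ : (Nat.card {S : Submodule F2 (V n) //
        IsIsotropic S ∧ Module.finrank F2 S = m ∧ S ⊓ L = ⊥} : ℚ) *
      ∏ i ∈ Finset.range m, ((2:ℚ) ^ m - 2 ^ i) =
      ∏ i ∈ Finset.range m, ((2:ℚ) ^ (2*n - i) - 2 ^ n) := by
    rw [← castP, ← castQ, ← Nat.cast_mul, key]
  have hPne : (∏ i ∈ Finset.range m, ((2:ℚ) ^ m - 2 ^ i)) ≠ 0 := by
    apply Finset.prod_ne_zero_iff.mpr
    intro i hi
    have hi' := Finset.mem_range.mp hi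
    have : (2:ℚ) ^ i < 2 ^ m := by
      apply pow_lt_pow_right₀ (by norm_num) hi'
    intro h; nlinarith
  have rhsId : gaussBinom n m * 2 ^ (m * (m + 1) / 2) * 2 ^ (m * (n - m)) *
      ∏ i ∈ Finset.range m, ((2:ℚ) ^ m - 2 ^ i) =
      ∏ i ∈ Finset.range m, ((2:ℚ) ^ (2*n - i) - 2 ^ n) := by
    have hpow : (2:ℚ) ^ (m * (m + 1) / 2) * 2 ^ (m * (n - m)) =
        ∏ i ∈ Finset.range m, (2:ℚ) ^ (n - i) := by
      rw [Finset.prod_pow_eq_pow_sum, ← sum_exp n m hm, pow_add]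
    rw [gaussBinom, mul_assoc (∏ i ∈ Finset.range m, ((2:ℚ)^(n-i)-1)/((2:ℚ)^(m-i)-1)) _ _,
      hpow, ← Finset.prod_mul_distrib, ← Finset.prod_mul_distrib]
    refine Finset.prod_congr rfl fun i hi => ?_
    exact termwise n m i (Finset.mem_range.mp hi) hm
  exact mul_right_cancel₀ hPne (by rw [keyQ, rhsId])
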